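/- Let $\mathcal{C}_1,\dots,\mathcal{C}_K$ be closed intervals in $\mathbb{R}$ all of the same width $\delta > 0$, with midpoints $c_1,\dots,c_K$, and suppose $K$ is odd. If a point $s$ belongs to strictly more than $K/2$ of the intervals, then $s$ belongs to the interval whose midpoint is the median $c_{(\lceil K/2 \rceil)}$ of the midpoints. Consequently, the majority vote set $\mathcal{C}^M$ is contained in the interval $[c_{(\lceil K/2 \rceil)} - \delta/2,\ c_{(\lceil K/2 \rceil)} + \delta/2]$. -/

import Mathlib

open Set


theorem countP_ofFn {K : ℕ} (c : Fin K → ℝ) (p : ℝ → Prop) [DecidablePred p] :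
    (List.ofFn c).countP (fun x => decide (p x)) = (Finset.univ.filter (fun k => p (c k))).card := by
  have h1 : (List.ofFn c).countP (fun x => decide (p x))
      = Multiset.countP (fun x => decide (p x) = true) (↑(List.ofFn c) : Multiset ℝ) := by
    simp
  rw [h1, ← Fin.univ_val_map c, Multiset.countP_map]
  simp only [decide_eq_true_eq]
  rfl

theorem sorted_ge_of_countP_le (l : List ℝ) (hs : l.Pairwise (· ≤ ·)) (i : ℕ)
    (hi : i < l.length) (a : ℝ) (h : l.countP (fun x => decide (x < a)) ≤ i) :
    a ≤ l[i] := by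
  by_contra hlt
  push_neg at hlt
  have hcnt : (l.take (i+1)).countP (fun x => decide (x < a)) = (l.take (i+1)).length := by
    rw [List.countP_eq_length]
    intro x hx
    rw [List.mem_take_iff_getElem] at hx
    obtain ⟨j, hj, rfl⟩ := hx
    have hj' : j < l.length := lt_of_lt_of_le (lt_min_iff.mp hj).1 (by omega)
    have : l.get ⟨j, hj'⟩ ≤ l.get ⟨i, hi⟩ := hs.rel_get_of_le (by simp; omega)
    simp only [List.get_eq_getElem] at this
    simp only [decide_eq_true_eq]
    linarith
  have hlen : (l.take (i+1)).length = i + 1 := by simp; omega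
  have hsub := List.Sublist.countP_le (p := fun x => decide (x < a)) (List.take_sublist (i+1) l)
  omega

theorem sorted_le_of_countP_le (l : List ℝ) (hs : l.Pairwise (· ≤ ·)) (i : ℕ)
    (hi : i < l.length) (b : ℝ) (h : l.countP (fun x => decide (b < x)) ≤ l.length - 1 - i) :
    l[i] ≤ b := by
  by_contra hlt
  push_neg at hlt
  have hcnt : (l.drop i).countP (fun x => decide (b < x)) = (l.drop i).length := by
    rw [List.countP_eq_length]
    intro x hx
    rw [List.mem_drop_iff_getElem] at hx
    obtain ⟨j, hj, rfl⟩ := hx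
    have hj' : i + j < l.length := by omega
    have : l.get ⟨i, hi⟩ ≤ l.get ⟨i + j, hj'⟩ := hs.rel_get_of_le (by simp)
    simp only [List.get_eq_getElem] at this
    simp only [decide_eq_true_eq]
    linarith
  have hlen : (l.drop i).length = l.length - i := by simp
  have hsub := List.Sublist.countP_le (p := fun x => decide (b < x)) (List.drop_sublist i l)
  omega

/-- The `⌈K/2⌉`-th smallest value (1-indexed) among `c 0, …, c (K-1)`. -/
noncomputable def medianOf {K : ℕ} (c : Fin K → ℝ) : ℝ :=
  (Multiset.sort (Multiset.ofList (List.ofFn c)) (· ≤ ·)).getD ((K + 1) / 2 - 1) 0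

theorem median_of_midpoints (K : ℕ) (hodd : Odd K)
    (δ : ℝ) (hδ : 0 < δ) (c : Fin K → ℝ)
    (C : Fin K → Set ℝ) (hC : ∀ k, C k = Set.Icc (c k - δ / 2) (c k + δ / 2)) :
    (∀ s : ℝ, (K : ℝ) / 2 < ∑ k, (C k).indicator (fun _ => (1 : ℝ)) s →
      s ∈ Set.Icc (medianOf c - δ / 2) (medianOf c + δ / 2)) ∧
    {s : ℝ | (1 / K : ℝ) * ∑ k, (C k).indicator (fun _ => (1 : ℝ)) s > 1 / 2} ⊆
      Set.Icc (medianOf c - δ / 2) (medianOf c + δ / 2) := by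
  classical
  obtain ⟨m, hm⟩ := hodd
  have hK1 : 1 ≤ K := by omega
  set l : List ℝ := Multiset.sort (Multiset.ofList (List.ofFn c)) (· ≤ ·) with hl
  have hlen : l.length = K := by
    simp [hl]
  have hsorted : l.Pairwise (· ≤ ·) := Multiset.pairwise_sort _ _
  have hperm : l.Perm (List.ofFn c) := by
    have := Multiset.sort_eq (α := ℝ) (↑(List.ofFn c) : Multiset ℝ) (· ≤ ·)
    exact Multiset.coe_eq_coe.mp this
  set i : ℕ := (K + 1) / 2 - 1 with hi
  have hiK : i < K := by omega
  have hilen : i < l.length := by omega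
  have hmed : medianOf c = l[i] := by
    rw [medianOf, ← hl, List.getD_eq_getElem _ _ hilen]
  have main : ∀ s : ℝ, (K : ℝ) / 2 < ∑ k, (C k).indicator (fun _ => (1 : ℝ)) s →
      s ∈ Set.Icc (medianOf c - δ / 2) (medianOf c + δ / 2) := by
    intro s hs
    set A : Finset (Fin K) := Finset.univ.filter (fun k => s ∈ C k) with hA
    have hsum : ∑ k, (C k).indicator (fun _ => (1 : ℝ)) s = (A.card : ℝ) := by
      rw [hA, ← Finset.sum_boole]
      apply Finset.sum_congr rfl
      intro k _
      simp [Set.indicator_apply]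
    rw [hsum] at hs
    have hcard : K < 2 * A.card := by
      have : (K : ℝ) < 2 * A.card := by linarith
      exact_mod_cast this
    -- A ⊆ complement of both bad filters
    have key : ∀ (p : ℝ → Prop) (_ : DecidablePred p), (∀ k ∈ A, ¬ p (c k)) →
        l.countP (fun x => decide (p x)) ≤ m := by
      intro p hp hcompl
      rw [List.Perm.countP_eq _ hperm, countP_ofFn]
      have hdisj : Disjoint (Finset.univ.filter (fun k => p (c k))) A := by
        rw [Finset.disjoint_right]
        intro k hk hk'
        exact hcompl k hk (by simpa using hk')
      have := Finset.card_union_of_disjoint hdisj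
      have hle : ((Finset.univ.filter (fun k => p (c k))) ∪ A).card ≤ K := by
        simpa using Finset.card_le_univ ((Finset.univ.filter fun k => p (c k)) ∪ A)
      omega
    have hmem : ∀ k ∈ A, c k - δ / 2 ≤ s ∧ s ≤ c k + δ / 2 := by
      intro k hk
      have : s ∈ C k := by simpa [hA] using hk
      rw [hC k] at this
      exact this
    have h1 : l.countP (fun x => decide (x < s - δ / 2)) ≤ m := by
      apply key _ inferInstance
      intro k hk
      have := (hmem k hk).2
      simp only [not_lt]
      linarith
    have h2 : l.countP (fun x => decide (s + δ / 2 < x)) ≤ m := by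
      apply key _ inferInstance
      intro k hk
      have := (hmem k hk).1
      simp only [not_lt]
      linarith
    have him : i = m := by omega
    have hlow : s - δ / 2 ≤ l[i] :=
      sorted_ge_of_countP_le l hsorted i hilen _ (by omega)
    have hhigh : l[i] ≤ s + δ / 2 :=
      sorted_le_of_countP_le l hsorted i hilen _ (by omega)
    rw [hmed]
    constructor <;> linarith
  refine ⟨main, ?_⟩
  intro s hs
  apply main
  simp only [Set.mem_setOf_eq] at hs
  have hK0 : (0 : ℝ) < K := by exact_mod_cast hK1
  have h := mul_lt_mul_of_pos_left hs hK0
  rw [← mul_assoc] at h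
  have hc : (K : ℝ) * (1 / K) = 1 := by field_simp
  rw [hc, one_mul] at h
  linarith
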